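/- For every real a with |a| ≥ 1 and every non-negative integer n, (1/π) ∫_{−2}^{2} u^n √(1 − u²/4)/(u + 2a) du = ω(a)(−2a)^n + Σ_{k=0}^{⌊(n−1)/2⌋} (−2a)^{n−2k−1} C_k, where ω(a) = a − sgn(a)·√(a² − 1) and C_k is the k-th Catalan number. -/

import Mathlib

/-- `ω(a) = a - sgn(a)·√(a² - 1)`, the value of `(1/π)∫_{-1}^{1} √(1-u²)/(u+a) du`
for `|a| ≥ 1`. -/
noncomputable def omegaFn (a : ℝ) : ℝ := a - Real.sign a * Real.sqrt (a ^ 2 - 1)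

open MeasureTheory intervalIntegral Real Set

lemma cb_succ_real (k : ℕ) : ((k+1 : ℕ).centralBinom : ℝ) =
    2 * (2 * k + 1) * Nat.centralBinom k / (k + 1) := by
  have hcb : ((k:ℝ) + 1) * (Nat.centralBinom (k+1)) = 2 * (2 * k + 1) * Nat.centralBinom k := by
    exact_mod_cast Nat.succ_mul_centralBinom_succ k
  field_simp
  linarith [hcb]

lemma catalan_real (k : ℕ) : ((catalan k : ℕ) : ℝ) = (Nat.centralBinom k : ℝ) / (k + 1) := by
  have h : ((k:ℝ) + 1) * (catalan k) = Nat.centralBinom k := by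
    exact_mod_cast succ_mul_catalan_eq_centralBinom k
  field_simp
  linarith [h]

lemma sin_pow_rec (n : ℕ) :
    (∫ x in (-(π/2))..(π/2), Real.sin x ^ (n + 2)) =
      (n + 1) / (n + 2) * ∫ x in (-(π/2))..(π/2), Real.sin x ^ n := by
  rw [integral_sin_pow]
  simp

lemma sin_pow_even (k : ℕ) :
    (∫ x in (-(π/2))..(π/2), Real.sin x ^ (2 * k)) =
      π * (Nat.centralBinom k) / 4 ^ k := by
  induction k with
  | zero => simp
  | succ k ih =>
    have h2 : 2 * (k + 1) = 2 * k + 2 := by ring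
    rw [h2, sin_pow_rec, ih, cb_succ_real]
    push_cast
    have hk1 : ((k:ℝ) + 1) ≠ 0 := by positivity
    field_simp
    ring

lemma momentEven (k : ℕ) :
    (∫ u in (-2:ℝ)..2, u ^ (2 * k) * Real.sqrt (1 - u ^ 2 / 4)) = π * catalan k := by
  have hsub := integral_comp_smul_deriv (a := -(π/2)) (b := π/2)
      (f := fun θ => 2 * Real.sin θ) (f' := fun θ => 2 * Real.cos θ)
      (g := fun u => u ^ (2 * k) * Real.sqrt (1 - u ^ 2 / 4))
      (fun x _ => by simpa using ((Real.hasDerivAt_sin x).const_mul 2))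
      (by fun_prop)
      (by fun_prop)
  norm_num at hsub
  rw [← hsub]
  have hcongr : (∫ x in (-(π/2))..(π/2),
        (2 * Real.cos x) * ((2 * Real.sin x) ^ (2*k) * Real.sqrt (1 - (2 * Real.sin x) ^ 2 / 4)))
      = ∫ x in (-(π/2))..(π/2),
        2 ^ (2*k+1) * (Real.sin x ^ (2*k) - Real.sin x ^ (2*k+2)) := by
    apply integral_congr
    intro x hx
    have hx' : x ∈ Icc (-(π/2)) (π/2) := by
      rwa [uIcc_of_le (by linarith [Real.pi_pos])] at hx
    have hcos : 0 ≤ Real.cos x := Real.cos_nonneg_of_mem_Icc hx'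
    have h1 : 1 - (2 * Real.sin x) ^ 2 / 4 = Real.cos x ^ 2 := by
      have := Real.sin_sq_add_cos_sq x
      ring_nf
      nlinarith [this]
    simp only [h1, Real.sqrt_sq hcos]
    have hpy := Real.sin_sq_add_cos_sq x
    have hc2 : Real.cos x ^ 2 = 1 - Real.sin x ^ 2 := by linarith
    rw [mul_pow]
    rw [show (2:ℝ) * Real.cos x * (2 ^ (2*k) * Real.sin x ^ (2*k) * Real.cos x)
        = 2 ^ (2*k+1) * Real.sin x ^ (2*k) * Real.cos x ^ 2 by ring, hc2]
    ring
  rw [hcongr]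
  rw [intervalIntegral.integral_const_mul, intervalIntegral.integral_sub
      (by apply Continuous.intervalIntegrable; fun_prop)
      (by apply Continuous.intervalIntegrable; fun_prop)]
  rw [sin_pow_even, show 2*k+2 = 2*(k+1) by ring, sin_pow_even, cb_succ_real, catalan_real]
  have h2 : (2:ℝ)^(2*k+1) = 2 * 4^k := by
    rw [pow_succ, pow_mul]; norm_num; ring
  rw [h2]
  push_cast
  have hk1 : ((k:ℝ) + 1) ≠ 0 := by positivity
  field_simp
  ring


lemma momentOdd (k : ℕ) :
    (∫ u in (-2:ℝ)..2, u ^ (2 * k + 1) * Real.sqrt (1 - u ^ 2 / 4)) = 0 := by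
  set f : ℝ → ℝ := fun u => u ^ (2 * k + 1) * Real.sqrt (1 - u ^ 2 / 4) with hf
  have h : (∫ x in (-2:ℝ)..2, f (-x)) = ∫ x in (-2:ℝ)..2, f x := by
    simpa using intervalIntegral.integral_comp_neg (a := (-2:ℝ)) (b := 2) f
  have h2 : (∫ x in (-2:ℝ)..2, f (-x)) = ∫ x in (-2:ℝ)..2, -f x := by
    apply integral_congr
    intro x _
    have ho : (-x)^(2*k+1) = -x^(2*k+1) := Odd.neg_pow ⟨k, by ring⟩ x
    simp only [hf, ho, neg_sq]
    ring
  rw [h2, intervalIntegral.integral_neg] at h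
  linarith

lemma integrable_f (a : ℝ) (ha : 1 ≤ a) (n : ℕ) :
    IntervalIntegrable (fun u => u ^ n * Real.sqrt (1 - u ^ 2 / 4) / (u + 2 * a))
      volume (-2) 2 := by
  rcases eq_or_lt_of_le ha with heq | hlt
  · -- a = 1
    subst heq
    have h1 : IntervalIntegrable (fun x : ℝ => x ^ (-(1:ℝ)/2)) volume 0 4 :=
      intervalIntegrable_rpow' (by norm_num)
    have h2 := h1.comp_sub_right (-2)
    simp only [sub_neg_eq_add, show (0:ℝ)+(-2) = -2 by norm_num,
      show (4:ℝ)+(-2) = 2 by norm_num] at h2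
    have h3 : IntervalIntegrable (fun x : ℝ => 2 ^ n * (x + 2) ^ (-(1:ℝ)/2)) volume (-2) 2 :=
      h2.const_mul ((2:ℝ) ^ n)
    apply h3.mono_fun
    · apply Measurable.aestronglyMeasurable
      fun_prop
    · rw [uIoc_of_le (by norm_num : (-2:ℝ) ≤ 2)]
      filter_upwards [ae_restrict_mem measurableSet_Ioc] with x hx
      have hx2 : (0:ℝ) < x + 2 := by linarith [hx.1]
      have hxle : x ≤ 2 := hx.2
      have hax : |x| ≤ 2 := abs_le.2 ⟨by linarith [hx.1], hxle⟩
      have hsqpos : (0:ℝ) < Real.sqrt (x + 2) := Real.sqrt_pos.2 hx2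
      have hs : Real.sqrt (1 - x ^ 2 / 4) ≤ Real.sqrt (x + 2) := by
        apply Real.sqrt_le_sqrt
        nlinarith
      have hpow : |x| ^ n ≤ 2 ^ n := pow_le_pow_left₀ (abs_nonneg x) hax n
      have key : |x| ^ n * Real.sqrt (1 - x ^ 2 / 4) ≤ 2 ^ n * Real.sqrt (x + 2) :=
        mul_le_mul hpow hs (Real.sqrt_nonneg _) (by positivity)
      have e1 : ‖x ^ n * Real.sqrt (1 - x ^ 2 / 4) / (x + 2 * 1)‖
          = |x| ^ n * Real.sqrt (1 - x ^ 2 / 4) / (x + 2) := by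
        rw [Real.norm_eq_abs, abs_div, abs_mul, abs_pow,
          abs_of_nonneg (Real.sqrt_nonneg _), abs_of_pos (by linarith : (0:ℝ) < x + 2 * 1)]
        norm_num
      have e2 : ‖(2:ℝ) ^ n * (x + 2) ^ (-(1:ℝ)/2)‖ = 2 ^ n * (Real.sqrt (x + 2))⁻¹ := by
        rw [Real.norm_eq_abs, abs_mul, abs_pow, abs_two,
          show (-(1:ℝ)/2) = -(1/2) by ring, Real.rpow_neg hx2.le,
          abs_of_nonneg (by positivity), ← Real.sqrt_eq_rpow]
      rw [e1, e2, div_le_iff₀ hx2]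
      have einv : (Real.sqrt (x + 2))⁻¹ * (x + 2) = Real.sqrt (x + 2) := by
        field_simp
        nlinarith [Real.sq_sqrt hx2.le]
      calc |x| ^ n * Real.sqrt (1 - x ^ 2 / 4) ≤ 2 ^ n * Real.sqrt (x + 2) := key
        _ = 2 ^ n * (Real.sqrt (x + 2))⁻¹ * (x + 2) := by rw [mul_assoc, einv]
  · -- 1 < a
    apply ContinuousOn.intervalIntegrable
    apply ContinuousOn.div (by fun_prop) (by fun_prop)
    intro x hx
    rw [uIcc_of_le (by norm_num : (-2:ℝ) ≤ 2)] at hx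
    have : (0:ℝ) < x + 2 * a := by linarith [hx.1]
    exact ne_of_gt this


lemma hasDerivAt_sqrtPart (x : ℝ) (hx : x ∈ Ioo (-2:ℝ) 2) :
    HasDerivAt (fun u : ℝ => Real.sqrt (1 - u ^ 2 / 4))
      (-(x/2) / (2 * Real.sqrt (1 - x ^ 2 / 4))) x := by
  have hpos : (0:ℝ) < 1 - x ^ 2 / 4 := by nlinarith [hx.1, hx.2]
  have hinner : HasDerivAt (fun u : ℝ => 1 - u ^ 2 / 4) (-(x/2)) x := by
    have h := ((hasDerivAt_pow 2 x).div_const 4).const_sub 1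
    exact h.congr_deriv (by norm_num; ring)
  exact hinner.sqrt (ne_of_gt hpos)

lemma hasDerivAt_arcsinHalf (x : ℝ) (hx : x ∈ Ioo (-2:ℝ) 2) :
    HasDerivAt (fun u : ℝ => Real.arcsin (u / 2))
      (1 / Real.sqrt (1 - x ^ 2 / 4) * (1/2)) x := by
  have h1 : x / 2 ≠ -1 := by intro h; nlinarith [hx.1]
  have h2 : x / 2 ≠ 1 := by intro h; nlinarith [hx.2]
  have h := (Real.hasDerivAt_arcsin h1 h2).comp x ((hasDerivAt_id x).div_const 2)
  have e : (1:ℝ) - (x/2) ^ 2 = 1 - x ^ 2 / 4 := by ring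
  rw [e] at h
  exact h

lemma omega_integral (a : ℝ) (ha : 1 ≤ a) :
    (∫ u in (-2:ℝ)..2, Real.sqrt (1 - u ^ 2 / 4) / (u + 2 * a))
      = π * (a - Real.sqrt (a ^ 2 - 1)) := by
  have hint : IntervalIntegrable (fun u => Real.sqrt (1 - u ^ 2 / 4) / (u + 2 * a))
      volume (-2) 2 := by
    have := integrable_f a ha 0
    simpa using this
  rcases eq_or_lt_of_le ha with heq | hlt
  · -- a = 1
    subst heq
    set F : ℝ → ℝ := fun u => Real.arcsin (u/2) + Real.sqrt (1 - u ^ 2 / 4) with hFdef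
    have hcont : ContinuousOn F (Icc (-2:ℝ) 2) :=
      ((Real.continuous_arcsin.comp (by fun_prop)).add
        (Real.continuous_sqrt.comp (by fun_prop))).continuousOn
    have hderiv : ∀ x ∈ Ioo (-2:ℝ) 2, HasDerivWithinAt F
        (Real.sqrt (1 - x ^ 2 / 4) / (x + 2 * 1)) (Ioi x) x := by
      intro x hx
      have hpos : (0:ℝ) < 1 - x ^ 2 / 4 := by nlinarith [hx.1, hx.2]
      have hs2 : Real.sqrt (1 - x ^ 2 / 4) ^ 2 = 1 - x ^ 2 / 4 := Real.sq_sqrt (le_of_lt hpos)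
      set s := Real.sqrt (1 - x ^ 2 / 4) with hsdef
      have hsp : 0 < s := Real.sqrt_pos.2 hpos
      have hsne : s ≠ 0 := ne_of_gt hsp
      have hd := (hasDerivAt_arcsinHalf x hx).add (hasDerivAt_sqrtPart x hx)
      rw [← hsdef] at hd
      have heq : 1 / s * (1/2) + -(x/2) / (2 * s) = s / (x + 2 * 1) := by
        have hx2 : (x + 2 : ℝ) ≠ 0 := by have := hx.1; intro h; linarith
        field_simp [hx2]
        linear_combination (-4) * hs2
      rw [heq] at hd
      exact hd.hasDerivWithinAt
    have := intervalIntegral.integral_eq_sub_of_hasDeriv_right_of_le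
      (by norm_num : (-2:ℝ) ≤ 2) hcont hderiv hint
    rw [this, hFdef]
    norm_num [Real.arcsin_one, Real.arcsin_neg_one]
  · -- 1 < a
    set t := Real.sqrt (a ^ 2 - 1) with ht
    have ht2 : t ^ 2 = a ^ 2 - 1 := Real.sq_sqrt (by nlinarith)
    have htpos : 0 < t := Real.sqrt_pos.2 (by nlinarith)
    set F : ℝ → ℝ := fun u => a * Real.arcsin (u/2) + Real.sqrt (1 - u ^ 2 / 4)
      - t * Real.arcsin ((2 + a * u) / (2 * a + u)) with hFdef
    have hcont : ContinuousOn F (Icc (-2:ℝ) 2) := by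
      apply ContinuousOn.sub
      · exact ((continuous_const.mul (Real.continuous_arcsin.comp (by fun_prop))).add
          (Real.continuous_sqrt.comp (by fun_prop))).continuousOn
      · apply ContinuousOn.mul continuousOn_const
        apply Real.continuous_arcsin.comp_continuousOn
        apply ContinuousOn.div (by fun_prop) (by fun_prop)
        intro x hx
        simp only [mem_Icc] at hx
        have : (0:ℝ) < 2 * a + x := by linarith [hx.1]
        exact ne_of_gt this
    have hderiv : ∀ x ∈ Ioo (-2:ℝ) 2, HasDerivWithinAt F
        (Real.sqrt (1 - x ^ 2 / 4) / (x + 2 * a)) (Ioi x) x := by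
      intro x hx
      have hpos : (0:ℝ) < 1 - x ^ 2 / 4 := by nlinarith [hx.1, hx.2]
      have hs2 : Real.sqrt (1 - x ^ 2 / 4) ^ 2 = 1 - x ^ 2 / 4 :=
        Real.sq_sqrt (le_of_lt hpos)
      set s := Real.sqrt (1 - x ^ 2 / 4) with hsdef
      have hsp : 0 < s := Real.sqrt_pos.2 hpos
      have hden : (0:ℝ) < 2 * a + x := by linarith [hx.1]
      have hdne : (2 * a + x) ≠ 0 := ne_of_gt hden
      have hsne : s ≠ 0 := ne_of_gt hsp
      have htne : t ≠ 0 := ne_of_gt htpos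
      have hq : HasDerivAt (fun u : ℝ => (2 + a * u) / (2 * a + u))
          ((a * (2 * a + x) - (2 + a * x)) / (2 * a + x) ^ 2) x := by
        have h := ((hasDerivAt_const x (2:ℝ)).add ((hasDerivAt_id x).const_mul a)).div
          ((hasDerivAt_const x (2*a)).add (hasDerivAt_id x)) (ne_of_gt hden)
        exact h.congr_deriv (by simp)
      have hqne1 : (2 + a * x) / (2 * a + x) ≠ 1 := by
        intro h
        rw [div_eq_iff hdne] at h
        have hz : (a - 1) * (x - 2) = 0 := by linear_combination h
        rcases mul_eq_zero.1 hz with h' | h'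
        · linarith
        · have := hx.2; linarith
      have hqnem1 : (2 + a * x) / (2 * a + x) ≠ -1 := by
        intro h
        rw [div_eq_iff hdne] at h
        have hz : (a + 1) * (x + 2) = 0 := by linear_combination h
        rcases mul_eq_zero.1 hz with h' | h'
        · linarith
        · have := hx.1; linarith
      have harc := (Real.hasDerivAt_arcsin hqnem1 hqne1).comp x hq
      have hsqrtq : Real.sqrt (1 - ((2 + a * x) / (2 * a + x)) ^ 2)
          = 2 * t * s / (2 * a + x) := by
        rw [show 1 - ((2 + a * x) / (2 * a + x)) ^ 2 = (2 * t * s / (2 * a + x)) ^ 2 by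
          field_simp
          nlinarith [ht2, hs2]]
        exact Real.sqrt_sq (by positivity)
      rw [hsqrtq] at harc
      have hC := harc.const_mul t
      have hA := (hasDerivAt_arcsinHalf x hx).const_mul a
      have hB := hasDerivAt_sqrtPart x hx
      rw [← hsdef] at hA hB
      have hd := (hA.add hB).sub hC
      have e1 : t * (1 / (2 * t * s / (2 * a + x)) *
            ((a * (2 * a + x) - (2 + a * x)) / (2 * a + x) ^ 2))
          = (a * (2 * a + x) - (2 + a * x)) / (2 * s * (2 * a + x)) := by
        field_simp
      rw [e1] at hd
      have heq : a * (1 / s * (1/2)) + -(x/2) / (2 * s)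
          - (a * (2 * a + x) - (2 + a * x)) / (2 * s * (2 * a + x))
          = s / (x + 2 * a) := by
        have hx2a : (0:ℝ) < x + 2 * a := by linarith [hx.1]
        have hx2ane : (x + 2 * a : ℝ) ≠ 0 := ne_of_gt hx2a
        field_simp [hx2ane]
        rw [show x + a*2 = a*2 + x by ring, eq_div_iff (by linarith), sub_mul,
          div_mul_cancel₀ _ (by linarith)]
        linear_combination (-4) * hs2
      rw [heq] at hd
      exact hd.hasDerivWithinAt
    have hkey := intervalIntegral.integral_eq_sub_of_hasDeriv_right_of_le
      (by norm_num : (-2:ℝ) ≤ 2) hcont hderiv hint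
    rw [hkey, hFdef]
    simp only
    have h1 : (2 + a * 2) / (2 * a + 2) = 1 := by
      rw [show (2:ℝ) + a * 2 = 2 * a + 2 by ring]
      exact div_self (by linarith)
    have h2 : (2 + a * (-2)) / (2 * a + (-2)) = -1 := by
      have hne : (2 * a + (-2) : ℝ) ≠ 0 := by
        intro h; linarith
      rw [div_eq_iff hne]
      ring
    rw [h1, h2]
    norm_num [Real.arcsin_one, Real.arcsin_neg_one]
    ring


lemma key_pos (a : ℝ) (ha : 1 ≤ a) (n : ℕ) :
    (∫ u in (-2:ℝ)..2, u ^ n * Real.sqrt (1 - u ^ 2 / 4) / (u + 2 * a))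
      = π * ((a - Real.sqrt (a ^ 2 - 1)) * (-2 * a) ^ n
        + ∑ k ∈ Finset.range ((n + 1) / 2), (-2 * a) ^ (n - 2 * k - 1) * (catalan k : ℝ)) := by
  induction n with
  | zero =>
    simp only [pow_zero, one_mul, Nat.zero_add, Nat.reduceDiv, Finset.range_zero,
      Finset.sum_empty, add_zero]
    rw [omega_integral a ha]
    ring
  | succ n ih =>
    have hone : ∀ᵐ x : ℝ ∂volume, x ≠ -(2 * a) := by
      refine MeasureTheory.ae_iff.mpr ?_
      simp only [not_not]
      rw [show {x : ℝ | x = -(2*a)} = {-(2*a)} from rfl]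
      exact Real.volume_singleton
    have hstep : (∫ u in (-2:ℝ)..2, u ^ (n+1) * Real.sqrt (1 - u ^ 2 / 4) / (u + 2 * a))
        = ∫ u in (-2:ℝ)..2, (u ^ n * Real.sqrt (1 - u ^ 2 / 4)
            - 2 * a * (u ^ n * Real.sqrt (1 - u ^ 2 / 4) / (u + 2 * a))) := by
      apply intervalIntegral.integral_congr_ae
      filter_upwards [hone] with x hxne _
      have hd : x + 2 * a ≠ 0 := by
        intro h; apply hxne; linarith
      field_simp
      ring
    have hsplit : (∫ u in (-2:ℝ)..2, (u ^ n * Real.sqrt (1 - u ^ 2 / 4)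
            - 2 * a * (u ^ n * Real.sqrt (1 - u ^ 2 / 4) / (u + 2 * a))))
        = (∫ u in (-2:ℝ)..2, u ^ n * Real.sqrt (1 - u ^ 2 / 4))
          - 2 * a * ∫ u in (-2:ℝ)..2, u ^ n * Real.sqrt (1 - u ^ 2 / 4) / (u + 2 * a) := by
      rw [intervalIntegral.integral_sub
        (by apply Continuous.intervalIntegrable; fun_prop)
        ((integrable_f a ha n).const_mul (2*a)), intervalIntegral.integral_const_mul]
    rw [hstep, hsplit, ih]
    rcases Nat.even_or_odd n with ⟨m, hm⟩ | ⟨m, hm⟩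
    · -- n = m + m, even
      subst hm
      have hmom : (∫ u in (-2:ℝ)..2, u ^ (m+m) * Real.sqrt (1 - u ^ 2 / 4))
          = π * catalan m := by
        have := momentEven m
        rwa [show 2*m = m+m by ring] at this
      rw [hmom]
      rw [show (m+m+1)/2 = m by omega, show (m+m+1+1)/2 = m+1 by omega,
        Finset.sum_range_succ, show m+m+1-2*m-1 = 0 by omega]
      have hS : ∑ k ∈ Finset.range m, (-2*a) ^ (m+m+1-2*k-1) * (catalan k : ℝ)
          = ∑ k ∈ Finset.range m, (-2*a) * ((-2*a) ^ (m+m-2*k-1) * (catalan k : ℝ)) := by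
        apply Finset.sum_congr rfl
        intro k hk
        have hkm : k < m := Finset.mem_range.1 hk
        rw [show m+m+1-2*k-1 = (m+m-2*k-1)+1 by omega, pow_succ]
        ring
      rw [hS, ← Finset.mul_sum]
      ring
    · -- n = 2m+1, odd
      subst hm
      have hmom : (∫ u in (-2:ℝ)..2, u ^ (2*m+1) * Real.sqrt (1 - u ^ 2 / 4)) = 0 :=
        momentOdd m
      rw [hmom]
      rw [show (2*m+1+1)/2 = m+1 by omega, show (2*m+1+1+1)/2 = m+1 by omega]
      have hS : ∑ k ∈ Finset.range (m+1), (-2*a) ^ (2*m+1+1-2*k-1) * (catalan k : ℝ)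
          = ∑ k ∈ Finset.range (m+1), (-2*a) * ((-2*a) ^ (2*m+1-2*k-1) * (catalan k : ℝ)) := by
        apply Finset.sum_congr rfl
        intro k hk
        have hkm : k < m + 1 := Finset.mem_range.1 hk
        rw [show 2*m+1+1-2*k-1 = (2*m+1-2*k-1)+1 by omega, pow_succ]
        ring
      rw [hS, ← Finset.mul_sum]
      ring

theorem moments_of_rational_chebyshev_density (a : ℝ) (ha : 1 ≤ |a|) (n : ℕ) :
    (1 / Real.pi) * ∫ u in (-2 : ℝ)..2, u ^ n * Real.sqrt (1 - u ^ 2 / 4) / (u + 2 * a) =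
      omegaFn a * (-2 * a) ^ n +
        ∑ k ∈ Finset.range ((n + 1) / 2), (-2 * a) ^ (n - 2 * k - 1) * (catalan k : ℝ) := by
  have hπ : (π : ℝ) ≠ 0 := Real.pi_ne_zero
  rcases le_or_gt 1 a with hpos | hneg
  · rw [key_pos a hpos n, omegaFn, Real.sign_of_pos (by linarith : (0:ℝ) < a)]
    field_simp
  · have haneg : a ≤ -1 := by
      rcases abs_cases a with ⟨h1, h2⟩ | ⟨h1, h2⟩ <;> linarith
    have hb : (1:ℝ) ≤ -a := by linarith
    have hkey := key_pos (-a) hb n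
    rw [neg_sq] at hkey
    simp only [show (-2*(-a):ℝ) = 2*a by ring] at hkey
    set g : ℝ → ℝ := fun u => u ^ n * Real.sqrt (1 - u ^ 2 / 4) / (u + 2 * (-a)) with hgdef
    have hgflip : ∀ x : ℝ, g (-x) = (-1)^(n+1) * (x ^ n * Real.sqrt (1 - x ^ 2 / 4) / (x + 2 * a)) := by
      intro x
      simp only [hgdef]
      rw [show ((-x:ℝ)^2) = x^2 by ring, show ((-x:ℝ) + 2*(-a)) = -(x + 2*a) by ring,
        neg_pow, div_neg, pow_succ]
      ring
    have hflip : (∫ u in (-2:ℝ)..2, u ^ n * Real.sqrt (1 - u ^ 2 / 4) / (u + 2 * a))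
        = (-1)^(n+1) * ∫ u in (-2:ℝ)..2, g u := by
      have h1 : (∫ x in (-2:ℝ)..2, g (-x)) = ∫ x in (-2:ℝ)..2, g x := by
        simpa using intervalIntegral.integral_comp_neg (a := (-2:ℝ)) (b := 2) g
      have hsq : ((-1:ℝ))^(n+1) * ((-1:ℝ))^(n+1) = 1 := by
        rw [← pow_add]
        exact Even.neg_one_pow ⟨n+1, by ring⟩
      have h2 : (∫ x in (-2:ℝ)..2, g (-x))
          = (-1)^(n+1) * ∫ u in (-2:ℝ)..2, u ^ n * Real.sqrt (1 - u ^ 2 / 4) / (u + 2 * a) := by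
        rw [← intervalIntegral.integral_const_mul]
        apply intervalIntegral.integral_congr
        intro x _
        exact hgflip x
      rw [h2] at h1
      rw [← h1, ← mul_assoc, hsq, one_mul]
    rw [hflip, hkey, omegaFn, Real.sign_of_neg (by linarith : a < 0)]
    have expand : ∀ X Y : ℝ, (1/π) * ((-1:ℝ)^(n+1) * (π * (X + Y)))
        = (-1:ℝ)^(n+1) * X + (-1:ℝ)^(n+1) * Y := by
      intro X Y
      field_simp
    rw [expand]
    have hsplit : ∀ m : ℕ, ((-2*a):ℝ)^m = (-1)^m * (2*a)^m := fun m => by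
      rw [show ((-2*a):ℝ) = -1*(2*a) by ring, mul_pow]
    congr 1
    · rw [hsplit n, pow_succ]
      ring
    · rw [Finset.mul_sum]
      apply Finset.sum_congr rfl
      intro k hk
      have hkb : 2 * k + 1 ≤ n := by
        have := Finset.mem_range.1 hk
        omega
      have hpar : ((-1:ℝ))^(n+1) = (-1)^(n-2*k-1) := by
        rw [show n+1 = (n-2*k-1) + 2*(k+1) by omega, pow_add, pow_mul]
        norm_num
      rw [hsplit (n-2*k-1), ← hpar]
      ring
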